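/- Assume the setting below (case mindeg_q(G)=t/2, t even). Then the polynomial identity X^{q^t} G(λ) − λ^{q^t} G(X) = g(X)^{q^{t/2}} holds in F_{q^n}[X], where g(X) := G(λ)^{q^{n−t/2}} X^{q^{t/2}} − λ^{q^{t/2}}·( X + ∑ c_i^{q^{n−t/2}} X^{q^{i−t/2}} + C^{q^{n−t/2}} X^{q^{k−t/2}} ) is a separable polynomial of degree q^{k−t/2} (its coefficient of X is −λ^{q^{t/2}} ≠ 0). Consequently, the set of pairs (x̄, ȳ) in the algebraic closure of F_q with x̄^{q^t} G(λ) − λ^{q^t} G(x̄) = 0 and ȳ^{q^t} G(λ) − λ^{q^t} G(ȳ) = 0 (the affine singular points of the curve C) has cardinality at most q^{2k−t}. -/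

import Mathlib

open Polynomial

noncomputable section

/-- `G(x) = x^(q^(t/2)) + ∑_{i=t/2+1}^{k-1} c_i x^(q^i) + C x^(q^k)` (value at `x`),
case `mindeg_q G = t/2`. -/
def Gval2 (q t k : ℕ) {Ω : Type*} [Field Ω] (c : ℕ → Ω) (Cc x : Ω) : Ω :=
  x ^ q ^ (t / 2) + (∑ i ∈ Finset.Ico (t / 2 + 1) k, c i * x ^ q ^ i) + Cc * x ^ q ^ k

/-- `G` as a univariate polynomial. -/
def Gpoly2 (q t k : ℕ) {Ω : Type*} [Field Ω] (c : ℕ → Ω) (Cc : Ω) : Polynomial Ω :=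
  X ^ q ^ (t / 2) + (∑ i ∈ Finset.Ico (t / 2 + 1) k, C (c i) * X ^ q ^ i) + C Cc * X ^ q ^ k

/-- `g(X) := G(λ)^(q^(n−t/2)) X^(q^(t/2)) − λ^(q^(t/2)) (X + ∑ c_i^(q^(n−t/2)) X^(q^(i−t/2))
+ C^(q^(n−t/2)) X^(q^(k−t/2)))`. -/
def gsep2 (q n t k : ℕ) {Ω : Type*} [Field Ω] (c : ℕ → Ω) (Cc l : Ω) : Polynomial Ω :=
  C (Gval2 q t k c Cc l ^ q ^ (n - t / 2)) * X ^ q ^ (t / 2)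
    - C (l ^ q ^ (t / 2)) * (X
        + (∑ i ∈ Finset.Ico (t / 2 + 1) k, C (c i ^ q ^ (n - t / 2)) * X ^ q ^ (i - t / 2))
        + C (Cc ^ q ^ (n - t / 2)) * X ^ q ^ (k - t / 2))

/-- In the setting (case `mindeg_q G = t/2`, `t` even):
`X^(q^t) G(λ) − λ^(q^t) G(X) = g(X)^(q^(t/2))`, `g` is separable of degree `q^(k−t/2)`
with coefficient of `X` equal to `−λ^(q^(t/2)) ≠ 0`; consequently the set of affine
singular points of the curve `C` has cardinality at most `q^(2k−t)`. -/
theorem stmt_16 (q n t k : ℕ)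
    (F0 : Type) [Field F0] [Fintype F0] (hF0 : Fintype.card F0 = q)
    (ht : 0 < t) (hteven : t % 2 = 0) (h2tk : 2 * t < k) (hkn : k < n)
    (δ l Cc : AlgebraicClosure F0) (c : ℕ → AlgebraicClosure F0)
    (hδK : δ ^ q ^ n = δ) (hlK : l ^ q ^ n = l) (hCcK : Cc ^ q ^ n = Cc)
    (hcK : ∀ i, c i ^ q ^ n = c i)
    (hnorm : δ ^ ((q ^ n - 1) / (q - 1)) ≠ 1) (hCc : Cc ≠ 0)
    (hlq : l ^ q ≠ l)
    (hFl : l + δ * l ^ q ^ (2 * t) ≠ 0) (hGl : Gval2 q t k c Cc l ≠ 0) :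
    X ^ q ^ t * C (Gval2 q t k c Cc l) - C (l ^ q ^ t) * Gpoly2 q t k c Cc
        = gsep2 q n t k c Cc l ^ q ^ (t / 2) ∧
    (gsep2 q n t k c Cc l).natDegree = q ^ (k - t / 2) ∧
    (gsep2 q n t k c Cc l).Separable ∧
    (gsep2 q n t k c Cc l).coeff 1 = -(l ^ q ^ (t / 2)) ∧
    -(l ^ q ^ (t / 2)) ≠ 0 ∧
    Set.ncard {p : AlgebraicClosure F0 × AlgebraicClosure F0 |
        p.1 ^ q ^ t * Gval2 q t k c Cc l - l ^ q ^ t * Gval2 q t k c Cc p.1 = 0 ∧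
        p.2 ^ q ^ t * Gval2 q t k c Cc l - l ^ q ^ t * Gval2 q t k c Cc p.2 = 0}
      ≤ q ^ (2 * k - t) := by
  classical
  -- characteristic setup
  haveI : CharP F0 (ringChar F0) := ringChar.charP F0
  set p := ringChar F0 with hpdef
  obtain ⟨e, hpp, hcard⟩ := FiniteField.card F0 p
  haveI : Fact p.Prime := ⟨hpp⟩
  have hq : q = p ^ (e : ℕ) := by rw [← hF0, hcard]
  haveI : CharP (AlgebraicClosure F0) p := charP_of_injective_algebraMap' (A := AlgebraicClosure F0) F0 p
  haveI : CharP (Polynomial (AlgebraicClosure F0)) p := charP_of_injective_ringHom (C_injective (R := AlgebraicClosure F0)) p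
  have hqm : ∀ m : ℕ, q ^ m = p ^ ((e : ℕ) * m) := fun m => by rw [hq, ← pow_mul]
  have hq2 : 2 ≤ q := by rw [← hF0]; exact Fintype.one_lt_card
  -- arithmetic facts
  have hsn : t / 2 ≤ n := by omega
  have hl0 : l ≠ 0 := fun h => hlq (by rw [h, zero_pow (by omega : q ≠ 0)])
  have hfix : ∀ x : AlgebraicClosure F0, x ^ q ^ n = x → (x ^ q ^ (n - t / 2)) ^ q ^ (t / 2) = x := by
    intro x hx
    rw [← pow_mul, ← pow_add, Nat.sub_add_cancel hsn, hx]
  -- G(λ) is fixed by the q^n-power map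
  have hGK : Gval2 q t k c Cc l ^ q ^ n = Gval2 q t k c Cc l := by
    have hl' : ∀ m : ℕ, (l ^ q ^ m) ^ q ^ n = l ^ q ^ m := fun m => by
      rw [pow_right_comm, hlK]
    simp only [Gval2]
    rw [hqm n, add_pow_char_pow, add_pow_char_pow, sum_pow_char_pow]
    simp only [mul_pow, ← hqm n]
    rw [hl', hl', hCcK]
    congr 2
    exact Finset.sum_congr rfl fun i _ => by rw [hcK i, hl' i]
  -- the termwise transformation of the middle sum
  have hterm : ∀ i ∈ Finset.Ico (t / 2 + 1) k,
      ((C (c i ^ q ^ (n - t / 2)) * X ^ q ^ (i - t / 2) : Polynomial (AlgebraicClosure F0)) ^ p ^ ((e : ℕ) * (t / 2)))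
        = C (c i) * X ^ q ^ i := by
    intro i hi
    obtain ⟨hi1, hi2⟩ := Finset.mem_Ico.mp hi
    rw [← hqm (t / 2), mul_pow, ← C_pow, hfix _ (hcK i), ← pow_mul, ← pow_add,
      Nat.sub_add_cancel (by omega : t / 2 ≤ i)]
  -- the key polynomial identity
  have key : gsep2 q n t k c Cc l ^ q ^ (t / 2)
      = X ^ q ^ t * C (Gval2 q t k c Cc l) - C (l ^ q ^ t) * Gpoly2 q t k c Cc := by
    rw [show (gsep2 q n t k c Cc l) ^ q ^ (t / 2)
        = (gsep2 q n t k c Cc l) ^ p ^ ((e : ℕ) * (t / 2)) by rw [← hqm]]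
    simp only [gsep2]
    rw [sub_pow_char_pow, mul_pow, mul_pow, add_pow_char_pow, add_pow_char_pow,
      sum_pow_char_pow, Finset.sum_congr rfl hterm, mul_pow]
    simp only [← C_pow, ← hqm, ← pow_mul, ← pow_add]
    rw [show n - t / 2 + t / 2 = n from by omega, show k - t / 2 + t / 2 = k from by omega,
      show t / 2 + t / 2 = t from by omega, hGK, hCcK]
    simp only [Gpoly2]
    ring
  -- decomposition of gsep2 into leading monomial plus the rest
  have hr : gsep2 q n t k c Cc l
      = C (-(l ^ q ^ (t / 2) * Cc ^ q ^ (n - t / 2))) * X ^ q ^ (k - t / 2)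
        + (C (Gval2 q t k c Cc l ^ q ^ (n - t / 2)) * X ^ q ^ (t / 2)
          - C (l ^ q ^ (t / 2)) * X
          - C (l ^ q ^ (t / 2)) *
            ∑ i ∈ Finset.Ico (t / 2 + 1) k, C (c i ^ q ^ (n - t / 2)) * X ^ q ^ (i - t / 2)) := by
    simp only [gsep2, C_neg, C_mul]
    ring
  have hBne : l ^ q ^ (t / 2) ≠ 0 := pow_ne_zero _ hl0
  have hlead : -(l ^ q ^ (t / 2) * Cc ^ q ^ (n - t / 2)) ≠ 0 :=
    neg_ne_zero.mpr (mul_ne_zero hBne (pow_ne_zero _ hCc))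
  have hpowlt : ∀ m m' : ℕ, m < m' → (q ^ m : ℕ) < q ^ m' := fun m m' h =>
    Nat.pow_lt_pow_right (by omega) h
  -- degree computation
  have hdeg_rr : (C (Gval2 q t k c Cc l ^ q ^ (n - t / 2)) * X ^ q ^ (t / 2)
          - C (l ^ q ^ (t / 2)) * X
          - C (l ^ q ^ (t / 2)) *
            ∑ i ∈ Finset.Ico (t / 2 + 1) k, C (c i ^ q ^ (n - t / 2)) * X ^ q ^ (i - t / 2)
        : Polynomial (AlgebraicClosure F0)).degree < ((q ^ (k - t / 2) : ℕ) : WithBot ℕ) := by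
    refine lt_of_le_of_lt (degree_sub_le _ _) (max_lt (lt_of_le_of_lt (degree_sub_le _ _)
      (max_lt ?_ ?_)) ?_)
    · exact lt_of_le_of_lt (degree_C_mul_X_pow_le _ _)
        (by exact_mod_cast hpowlt (t / 2) (k - t / 2) (by omega))
    · refine lt_of_le_of_lt (degree_C_mul_X_le _) ?_
      have : (1 : ℕ) < q ^ (k - t / 2) :=
        Nat.one_lt_pow (by omega) (by omega)
      exact_mod_cast this
    · rw [← smul_eq_C_mul]
      refine lt_of_le_of_lt (degree_smul_le _ _) (lt_of_le_of_lt (degree_sum_le _ _) ?_)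
      rw [Finset.sup_lt_iff (by exact_mod_cast WithBot.bot_lt_coe _)]
      intro i hi
      obtain ⟨hi1, hi2⟩ := Finset.mem_Ico.mp hi
      exact lt_of_le_of_lt (degree_C_mul_X_pow_le _ _)
        (by exact_mod_cast hpowlt (i - t / 2) (k - t / 2) (by omega))
  have hdeg : (gsep2 q n t k c Cc l).degree = ((q ^ (k - t / 2) : ℕ) : WithBot ℕ) := by
    rw [hr, degree_add_eq_left_of_degree_lt, degree_C_mul_X_pow _ hlead]
    rw [degree_C_mul_X_pow _ hlead]
    exact hdeg_rr
  have hnatdeg : (gsep2 q n t k c Cc l).natDegree = q ^ (k - t / 2) :=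
    natDegree_eq_of_degree_eq_some hdeg
  -- derivative computation
  have hqΩ : ((q : ℕ) : AlgebraicClosure F0) = 0 := by
    rw [hq]
    push_cast
    rw [CharP.cast_eq_zero (AlgebraicClosure F0) p]
    exact zero_pow (by exact_mod_cast e.ne_zero)
  have hdC : ∀ (a : AlgebraicClosure F0) (m : ℕ), m ≠ 0 → derivative (C a * X ^ q ^ m : Polynomial (AlgebraicClosure F0)) = 0 := by
    intro a m hm
    rw [derivative_C_mul_X_pow, Nat.cast_pow, hqΩ, zero_pow hm, mul_zero, C_0, zero_mul]
  have hderiv : derivative (gsep2 q n t k c Cc l) = C (-(l ^ q ^ (t / 2))) := by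
    rw [hr, derivative_add, derivative_sub, derivative_sub, hdC _ _ (by omega),
      hdC _ _ (by omega), derivative_C_mul_X, derivative_C_mul, derivative_sum,
      Finset.sum_eq_zero (fun i hi => hdC _ _
        (by have := Finset.mem_Ico.mp hi; omega)), C_neg]
    ring
  have hsep : (gsep2 q n t k c Cc l).Separable := by
    rw [Polynomial.separable_def, hderiv]
    exact ⟨0, C ((-(l ^ q ^ (t / 2)))⁻¹), by
      rw [zero_mul, zero_add, ← C_mul, inv_mul_cancel₀ (neg_ne_zero.mpr hBne), C_1]⟩
  -- coefficient of X
  have hne1 : ∀ m : ℕ, 1 ≤ m → (1 : ℕ) ≠ q ^ m := fun m hm => by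
    have : 2 ≤ q ^ m := le_trans hq2 (Nat.le_self_pow (by omega) _)
    omega
  have hS : ∀ i ∈ Finset.Ico (t / 2 + 1) k,
      ((C (c i ^ q ^ (n - t / 2)) * X ^ q ^ (i - t / 2) : Polynomial (AlgebraicClosure F0))).coeff 1 = 0 := by
    intro i hi
    have hi' := Finset.mem_Ico.mp hi
    rw [coeff_C_mul, coeff_X_pow, if_neg (hne1 _ (by omega)), mul_zero]
  have hcoeff1 : (gsep2 q n t k c Cc l).coeff 1 = -(l ^ q ^ (t / 2)) := by
    rw [hr, coeff_add, coeff_sub, coeff_sub, coeff_C_mul, coeff_X_pow,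
      if_neg (hne1 _ (by omega)), coeff_C_mul, coeff_X_pow, if_neg (hne1 _ (by omega)),
      coeff_C_mul, coeff_X_one, coeff_C_mul, finset_sum_coeff, Finset.sum_eq_zero hS]
    ring
  have hB5 : -(l ^ q ^ (t / 2)) ≠ 0 := neg_ne_zero.mpr hBne
  have hg0 : gsep2 q n t k c Cc l ≠ 0 := fun h => hB5 (by rw [← hcoeff1, h, coeff_zero])
  refine ⟨key.symm, hnatdeg, hsep, hcoeff1, hB5, ?_⟩
  -- the cardinality bound
  have hGeval : ∀ x : AlgebraicClosure F0, eval x (Gpoly2 q t k c Cc) = Gval2 q t k c Cc x := by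
    intro x
    simp [Gpoly2, Gval2, eval_finset_sum]
  have hcond : ∀ x : AlgebraicClosure F0,
      (x ^ q ^ t * Gval2 q t k c Cc l - l ^ q ^ t * Gval2 q t k c Cc x = 0)
        ↔ eval x (gsep2 q n t k c Cc l) = 0 := by
    intro x
    have h1 : x ^ q ^ t * Gval2 q t k c Cc l - l ^ q ^ t * Gval2 q t k c Cc x
        = eval x (gsep2 q n t k c Cc l) ^ q ^ (t / 2) := by
      rw [← eval_pow, key, eval_sub, eval_mul, eval_mul, eval_pow, eval_X, eval_C, eval_C,
        hGeval]
    rw [h1, pow_eq_zero_iff (by positivity : (q : ℕ) ^ (t / 2) ≠ 0)]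
  set T : Finset (AlgebraicClosure F0) := (gsep2 q n t k c Cc l).roots.toFinset with hT
  have hTcard : T.card ≤ q ^ (k - t / 2) :=
    le_trans (Multiset.toFinset_card_le _) (le_trans (card_roots' _) (le_of_eq hnatdeg))
  have hsub : {p : AlgebraicClosure F0 × AlgebraicClosure F0 |
      p.1 ^ q ^ t * Gval2 q t k c Cc l - l ^ q ^ t * Gval2 q t k c Cc p.1 = 0 ∧
      p.2 ^ q ^ t * Gval2 q t k c Cc l - l ^ q ^ t * Gval2 q t k c Cc p.2 = 0}
      ⊆ ↑(T ×ˢ T) := by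
    rintro ⟨x, y⟩ ⟨h1, h2⟩
    simp only [Finset.coe_product, Set.mem_prod, Finset.mem_coe, hT,
      Multiset.mem_toFinset, mem_roots']
    exact ⟨⟨hg0, (hcond x).mp h1⟩, ⟨hg0, (hcond y).mp h2⟩⟩
  calc Set.ncard {p : AlgebraicClosure F0 × AlgebraicClosure F0 |
      p.1 ^ q ^ t * Gval2 q t k c Cc l - l ^ q ^ t * Gval2 q t k c Cc p.1 = 0 ∧
      p.2 ^ q ^ t * Gval2 q t k c Cc l - l ^ q ^ t * Gval2 q t k c Cc p.2 = 0}
      ≤ Set.ncard (↑(T ×ˢ T) : Set (AlgebraicClosure F0 × AlgebraicClosure F0)) :=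
        Set.ncard_le_ncard hsub (Finset.finite_toSet _)
    _ = (T ×ˢ T).card := Set.ncard_coe_finset _
    _ = T.card * T.card := Finset.card_product _ _
    _ ≤ q ^ (k - t / 2) * q ^ (k - t / 2) := Nat.mul_le_mul hTcard hTcard
    _ = q ^ (2 * k - t) := by rw [← pow_add]; congr 1; omega

end
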